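/- arXiv:1208.0652 — 8 statements merged into one kernel-verified Lean document; each statement's English description precedes it below -/
import Mathlib

section
/- The part 𝕊 of the Cayley cubic traced out by ℱ is invariant under the Fibonacci trace map and consists entirely of points with bounded forward orbit: for all θ, φ ∈ ℝ and every n ∈ ℕ, Tⁿ(ℱ(θ,φ)) lies in [−1,1]³; in particular every point of the image of ℱ has bounded forward orbit under T. -/
/-- The Fibonacci trace map. -/
noncomputable def traceMap : ℝ × ℝ × ℝ → ℝ × ℝ × ℝ :=
  fun p => (2 * p.1 * p.2.1 - p.2.2, p.1, p.2.1)

/-- The semiconjugacy ℱ. -/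
noncomputable def semiConj : ℝ × ℝ → ℝ × ℝ × ℝ :=
  fun q => (Real.cos (2 * Real.pi * (q.1 + q.2)),
            Real.cos (2 * Real.pi * q.1),
            Real.cos (2 * Real.pi * q.2))

lemma traceMap_semiConj (θ φ : ℝ) :
    traceMap (semiConj (θ, φ)) = semiConj (θ + φ, θ) := by
  simp only [traceMap, semiConj, Prod.mk.injEq, and_true, true_and]
  have h := Real.cos_add (2 * Real.pi * (θ + φ)) (2 * Real.pi * θ)
  have h2 := Real.cos_sub (2 * Real.pi * (θ + φ)) (2 * Real.pi * θ)
  have e1 : 2 * Real.pi * (θ + φ) + 2 * Real.pi * θ = 2 * Real.pi * (θ + φ + θ) := by ring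
  have e2 : 2 * Real.pi * (θ + φ) - 2 * Real.pi * θ = 2 * Real.pi * φ := by ring
  rw [e1] at h; rw [e2] at h2
  linarith

lemma iterate_semiConj (θ φ : ℝ) (n : ℕ) :
    ∃ a b : ℝ, traceMap^[n] (semiConj (θ, φ)) = semiConj (a, b) := by
  induction n with
  | zero => exact ⟨θ, φ, rfl⟩
  | succ n ih =>
      obtain ⟨a, b, h⟩ := ih
      exact ⟨a + b, a, by rw [Function.iterate_succ_apply', h, traceMap_semiConj]⟩

theorem image_of_semiConj_bounded_orbits :
    (∀ θ φ : ℝ, ∀ n : ℕ,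
      |(traceMap^[n] (semiConj (θ, φ))).1| ≤ 1 ∧
      |(traceMap^[n] (semiConj (θ, φ))).2.1| ≤ 1 ∧
      |(traceMap^[n] (semiConj (θ, φ))).2.2| ≤ 1) ∧
    (∀ θ φ : ℝ,
      Bornology.IsBounded (Set.range fun n : ℕ => traceMap^[n] (semiConj (θ, φ)))) := by
  have key : ∀ θ φ : ℝ, ∀ n : ℕ,
      |(traceMap^[n] (semiConj (θ, φ))).1| ≤ 1 ∧
      |(traceMap^[n] (semiConj (θ, φ))).2.1| ≤ 1 ∧
      |(traceMap^[n] (semiConj (θ, φ))).2.2| ≤ 1 := by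
    intro θ φ n
    obtain ⟨a, b, h⟩ := iterate_semiConj θ φ n
    rw [h]
    exact ⟨Real.abs_cos_le_one _, Real.abs_cos_le_one _, Real.abs_cos_le_one _⟩
  refine ⟨key, fun θ φ => ?_⟩
  have hsub : (Set.range fun n : ℕ => traceMap^[n] (semiConj (θ, φ))) ⊆
      (Set.Icc (-1:ℝ) 1) ×ˢ ((Set.Icc (-1:ℝ) 1) ×ˢ (Set.Icc (-1:ℝ) 1)) := by
    rintro p ⟨n, rfl⟩
    obtain ⟨h1, h2, h3⟩ := key θ φ n
    rw [abs_le] at h1 h2 h3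
    exact ⟨⟨h1.1, h1.2⟩, ⟨h2.1, h2.2⟩, ⟨h3.1, h3.2⟩⟩
  exact (Metric.isBounded_Icc _ _ |>.prod
    ((Metric.isBounded_Icc _ _).prod (Metric.isBounded_Icc _ _))).subset hsub
end

section
/- For every point p ∈ ℝ³, exactly one of the following holds: either the forward orbit {Tⁿ(p) : n ≥ 0} of p under the Fibonacci trace map is bounded, or the orbit diverges to infinity in every coordinate, i.e., the absolute value of each of the three coordinates of Tⁿ(p) tends to +∞ as n → ∞. -/
open Filter

/-- The invariant of the trace map recurrence is constant. -/
lemma traceInv_const (a : ℕ → ℝ)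
    (hrec : ∀ n, a (n+3) = 2 * a (n+2) * a (n+1) - a n) (n : ℕ) :
    a (n+2)^2 + a (n+1)^2 + a n^2 - 2 * a (n+2) * a (n+1) * a n
      = a 2^2 + a 1^2 + a 0^2 - 2 * a 2 * a 1 * a 0 := by
  induction n with
  | zero => rfl
  | succ k ih =>
    have h : a (k+1+2) = 2 * a (k+2) * a (k+1) - a k := hrec k
    rw [show k+1+2 = k+3 from rfl] at h
    rw [show k+1+2 = k+3 from rfl, show k+1+1 = k+2 from rfl, h]
    rw [← ih]
    ring

lemma traceEscape (a : ℕ → ℝ)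
    (hrec : ∀ n, a (n+3) = 2 * a (n+2) * a (n+1) - a n) (k : ℕ)
    (h1 : 1 < |a (k+1)|) (h2 : 1 < |a (k+2)|) (h3 : |a k| ≤ |a (k+2)|) :
    Tendsto (fun n => |a n|) atTop atTop := by
  set m := min |a (k+1)| |a (k+2)| with hm
  have hm1 : 1 < m := lt_min h1 h2
  have hb : 1 < 2*m - 1 := by linarith
  have key : ∀ j, m ≤ |a (k+j+1)| ∧ m ≤ |a (k+j+2)| ∧ |a (k+j)| ≤ |a (k+j+2)|
      ∧ (2*m-1)^j * m ≤ |a (k+j+2)| := by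
    intro j
    induction j with
    | zero =>
      refine ⟨?_, ?_, h3, ?_⟩
      · rw [hm]; exact min_le_left _ _
      · rw [hm]; exact min_le_right _ _
      · rw [pow_zero, one_mul, hm]; exact min_le_right _ _
    | succ i ih =>
      obtain ⟨q1, q2, q3, q4⟩ := ih
      have hr : a (k+i+3) = 2 * a (k+i+2) * a (k+i+1) - a (k+i) := hrec (k+i)
      have hlb : 2 * |a (k+i+2)| * |a (k+i+1)| - |a (k+i)| ≤ |a (k+i+3)| := by
        calc 2 * |a (k+i+2)| * |a (k+i+1)| - |a (k+i)|
            = |2 * a (k+i+2) * a (k+i+1)| - |a (k+i)| := by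
              rw [abs_mul, abs_mul, abs_two]
          _ ≤ |2 * a (k+i+2) * a (k+i+1) - a (k+i)| := abs_sub_abs_le_abs_sub _ _
          _ = _ := by rw [← hr]
      have hpow : (0:ℝ) ≤ (2*m-1)^i * m := by positivity
      refine ⟨?_, ?_, ?_, ?_⟩
      · exact q2
      · show m ≤ |a (k+i+3)|
        nlinarith [abs_nonneg (a (k+i)), abs_nonneg (a (k+i+1)), abs_nonneg (a (k+i+2))]
      · show |a (k+i+1)| ≤ |a (k+i+3)|
        nlinarith [abs_nonneg (a (k+i)), abs_nonneg (a (k+i+1)), abs_nonneg (a (k+i+2))]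
      · show (2*m-1)^(i+1) * m ≤ |a (k+i+3)|
        have : (2*m-1)^(i+1) * m = (2*m-1) * ((2*m-1)^i * m) := by ring
        rw [this]
        nlinarith [abs_nonneg (a (k+i)), abs_nonneg (a (k+i+1)), abs_nonneg (a (k+i+2))]
  have hpow : Tendsto (fun j : ℕ => (2*m-1)^j * m) atTop atTop :=
    (tendsto_pow_atTop_atTop_of_one_lt hb).atTop_mul_const (by linarith)
  have hsub : Tendsto (fun j : ℕ => |a (j + (k+2))|) atTop atTop := by
    apply tendsto_atTop_mono _ hpow
    intro j
    have := (key j).2.2.2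
    rwa [show k+j+2 = j+(k+2) by omega] at this
  exact (tendsto_add_atTop_iff_nat (k+2)).mp hsub

lemma traceBounded (a : ℕ → ℝ)
    (hrec : ∀ n, a (n+3) = 2 * a (n+2) * a (n+1) - a n)
    (hE : ∀ k, ¬(1 < |a (k+1)| ∧ 1 < |a (k+2)| ∧ |a k| ≤ |a (k+2)|)) :
    ∃ C, ∀ n, |a n| ≤ C := by
  set J := a 2^2 + a 1^2 + a 0^2 - 2 * a 2 * a 1 * a 0 with hJ
  set S := Real.sqrt (max J 0) with hS
  have hS0 : 0 ≤ S := Real.sqrt_nonneg _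
  have hS2 : S^2 = max J 0 := Real.sq_sqrt (le_max_right _ _)
  set C := max (max |a 0| |a 1|) (S + 2) with hC
  have hSC : S + 2 ≤ C := le_max_right _ _
  refine ⟨C, fun n => ?_⟩
  induction n using Nat.strong_induction_on with
  | _ n ih =>
    match n, ih with
    | 0, _ => exact le_trans (le_max_left _ _) (le_max_left _ _)
    | 1, _ => exact le_trans (le_max_right _ _) (le_max_left _ _)
    | (k+2), ih =>
      by_contra hcon
      push_neg at hcon
      have hk : |a k| ≤ C := ih k (by omega)
      have h2 : 1 < |a (k+2)| := by linarith
      have h3 : |a k| ≤ |a (k+2)| := hk.trans hcon.le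
      have h1 : |a (k+1)| ≤ 1 := by
        by_contra h
        exact hE k ⟨lt_of_not_ge h, h2, h3⟩
      have hinv : a (k+3)^2 + a (k+2)^2 + a (k+1)^2
          - 2 * a (k+3) * a (k+2) * a (k+1) = J := by
        have := traceInv_const a hrec (k+1)
        rwa [show k+1+2 = k+3 from rfl, show k+1+1 = k+2 from rfl] at this
      have he : a (k+3) * a (k+2) * a (k+1) ≤ |a (k+3)| * |a (k+2)| := by
        calc a (k+3) * a (k+2) * a (k+1) ≤ |a (k+3) * a (k+2) * a (k+1)| := le_abs_self _
          _ = |a (k+3)| * |a (k+2)| * |a (k+1)| := by rw [abs_mul, abs_mul]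
          _ ≤ |a (k+3)| * |a (k+2)| * 1 := by
              apply mul_le_mul_of_nonneg_left h1
              positivity
          _ = |a (k+3)| * |a (k+2)| := by ring
      have hsq : (|a (k+3)| - |a (k+2)|)^2 ≤ S^2 := by
        rw [hS2]
        have hle : (|a (k+3)| - |a (k+2)|)^2 ≤ J := by
          nlinarith [sq_abs (a (k+3)), sq_abs (a (k+2)), sq_nonneg (a (k+1))]
        exact hle.trans (le_max_left _ _)
      have h4 : |a (k+2)| - S ≤ |a (k+3)| := by nlinarith [hsq, hS0]
      have h5 : 1 < |a (k+3)| := by linarith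
      exact hE (k+1) ⟨h2, h5, by linarith⟩

theorem bounded_or_superexponential_escape (p : ℝ × ℝ × ℝ) :
    Xor'
      (Bornology.IsBounded (Set.range fun n : ℕ => traceMap^[n] p))
      (Tendsto (fun n : ℕ => |(traceMap^[n] p).1|) atTop atTop ∧
       Tendsto (fun n : ℕ => |(traceMap^[n] p).2.1|) atTop atTop ∧
       Tendsto (fun n : ℕ => |(traceMap^[n] p).2.2|) atTop atTop) := by
  have hstep : ∀ n : ℕ, traceMap^[n+1] p = traceMap (traceMap^[n] p) :=
    fun n => Function.iterate_succ_apply' traceMap n p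
  have h21 : ∀ n, (traceMap^[n+1] p).2.1 = (traceMap^[n] p).1 := by
    intro n; rw [hstep]; rfl
  have h22 : ∀ n, (traceMap^[n+2] p).2.2 = (traceMap^[n] p).1 := by
    intro n; rw [hstep]
    show (traceMap^[n+1] p).2.1 = _
    exact h21 n
  set a : ℕ → ℝ := fun n => (traceMap^[n] p).1 with ha
  have hrec : ∀ n, a (n+3) = 2 * a (n+2) * a (n+1) - a n := by
    intro n
    show (traceMap^[n+3] p).1 = _
    rw [hstep (n+2)]
    show 2 * (traceMap^[n+2] p).1 * (traceMap^[n+2] p).2.1 - (traceMap^[n+2] p).2.2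
      = 2 * a (n+2) * a (n+1) - a n
    rw [h21 (n+1), h22 n]
  by_cases hesc : ∃ k, 1 < |a (k+1)| ∧ 1 < |a (k+2)| ∧ |a k| ≤ |a (k+2)|
  · obtain ⟨k, e1, e2, e3⟩ := hesc
    have hT : Tendsto (fun n => |a n|) atTop atTop := traceEscape a hrec k e1 e2 e3
    have hT2 : Tendsto (fun n : ℕ => |(traceMap^[n] p).2.1|) atTop atTop := by
      refine (tendsto_add_atTop_iff_nat 1).mp (hT.congr fun n => ?_)
      rw [h21 n]
    have hT3 : Tendsto (fun n : ℕ => |(traceMap^[n] p).2.2|) atTop atTop := by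
      refine (tendsto_add_atTop_iff_nat 2).mp (hT.congr fun n => ?_)
      rw [h22 n]
    refine Or.inr ⟨⟨hT, hT2, hT3⟩, ?_⟩
    intro hbdd
    obtain ⟨D, hD⟩ := isBounded_iff_forall_norm_le.mp hbdd
    obtain ⟨n, hn⟩ := (hT.eventually_gt_atTop D).exists
    have : |a n| ≤ D := by
      have h := hD (traceMap^[n] p) ⟨n, rfl⟩
      calc |a n| = ‖(traceMap^[n] p).1‖ := (Real.norm_eq_abs _).symm
        _ ≤ ‖traceMap^[n] p‖ := norm_fst_le _
        _ ≤ D := h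
    linarith
  · have hE : ∀ k, ¬(1 < |a (k+1)| ∧ 1 < |a (k+2)| ∧ |a k| ≤ |a (k+2)|) :=
      fun k h => hesc ⟨k, h⟩
    obtain ⟨C, hC⟩ := traceBounded a hrec hE
    set D := max C (max |p.2.1| |p.2.2|) with hDdef
    have hbdd : Bornology.IsBounded (Set.range fun n : ℕ => traceMap^[n] p) := by
      rw [isBounded_iff_forall_norm_le]
      refine ⟨D, ?_⟩
      rintro x ⟨n, rfl⟩
      have hfst : ‖(traceMap^[n] p).1‖ ≤ D := by
        rw [Real.norm_eq_abs]
        exact (hC n).trans (le_max_left _ _)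
      have hsnd1 : ‖(traceMap^[n] p).2.1‖ ≤ D := by
        rw [Real.norm_eq_abs]
        match n with
        | 0 => exact le_trans (le_trans (le_max_left _ _) (le_max_right _ _)) (le_refl D)
        | (m+1) =>
          rw [h21 m]
          exact (hC m).trans (le_max_left _ _)
      have hsnd2 : ‖(traceMap^[n] p).2.2‖ ≤ D := by
        rw [Real.norm_eq_abs]
        match n with
        | 0 => exact le_trans (le_max_right _ _) (le_max_right _ _)
        | 1 =>
          have : (traceMap^[1] p).2.2 = p.2.1 := by
            rw [hstep 0]; rfl
          rw [this]
          exact le_trans (le_max_left _ _) (le_max_right _ _)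
        | (m+2) =>
          rw [h22 m]
          exact (hC m).trans (le_max_left _ _)
      calc ‖traceMap^[n] p‖ = max ‖(traceMap^[n] p).1‖ ‖(traceMap^[n] p).2‖ :=
            Prod.norm_def _
        _ ≤ D := by
            apply max_le hfst
            rw [Prod.norm_def]
            exact max_le hsnd1 hsnd2
    refine Or.inl ⟨hbdd, ?_⟩
    intro hB
    obtain ⟨n, hn⟩ := (hB.1.eventually_gt_atTop C).exists
    exact absurd (hC n) (not_le.mpr hn)
end

section
/- Sufficient condition for escape: if (x,y,z) ∈ ℝ³ satisfies |x| > 1, |y| > 1 and |xy| ≥ |z|, then the forward orbit {Tⁿ(x,y,z) : n ≥ 0} under the Fibonacci trace map is unbounded. Consequently, by the reversing symmetry s(x,y,z) = (z,y,x) of T, if |y| > 1, |z| > 1 and |yz| ≥ |x|, then the backward orbit {T⁻ⁿ(x,y,z) : n ≥ 0} is unbounded. -/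
/-- The inverse of the Fibonacci trace map. -/
noncomputable def traceMapInv : ℝ × ℝ × ℝ → ℝ × ℝ × ℝ :=
  fun p => (p.2.1, p.2.2, 2 * p.2.1 * p.2.2 - p.1)

lemma traceMap_step (c : ℝ) (hc : 1 < c) (q : ℝ × ℝ × ℝ)
    (h1 : c ≤ |q.1|) (h2 : c ≤ |q.2.1|) (h3 : |q.2.2| ≤ |q.1 * q.2.1|) :
    c ≤ |(traceMap q).1| ∧ c ≤ |(traceMap q).2.1| ∧
      |(traceMap q).2.2| ≤ |(traceMap q).1 * (traceMap q).2.1| ∧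
      c * |q.1| ≤ |(traceMap q).1| := by
  obtain ⟨a, b, z⟩ := q
  simp only [traceMap] at *
  have key : |a * b| ≤ |2 * a * b - z| := by
    have h := abs_sub_abs_le_abs_sub (2 * a * b) z
    have : |2 * a * b| = 2 * |a * b| := by
      rw [mul_assoc, abs_mul]; norm_num
    linarith
  have hab : |a| * |b| = |a * b| := (abs_mul a b).symm
  have ha0 : (0:ℝ) ≤ |a| := abs_nonneg a
  constructor
  · nlinarith
  refine ⟨h1, ?_, ?_⟩
  · rw [abs_mul]
    nlinarith [mul_le_mul_of_nonneg_right key ha0, abs_nonneg b, abs_nonneg z]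
  · nlinarith

lemma traceMap_escape (p : ℝ × ℝ × ℝ) (hx : 1 < |p.1|) (hy : 1 < |p.2.1|)
    (hz : |p.2.2| ≤ |p.1 * p.2.1|) :
    ¬ Bornology.IsBounded (Set.range fun n : ℕ => traceMap^[n] p) := by
  set c := min |p.1| |p.2.1| with hcdef
  have hc : 1 < c := lt_min hx hy
  have main : ∀ n : ℕ, c ≤ |(traceMap^[n] p).1| ∧ c ≤ |(traceMap^[n] p).2.1| ∧
      |(traceMap^[n] p).2.2| ≤ |(traceMap^[n] p).1 * (traceMap^[n] p).2.1| ∧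
      c ^ n ≤ |(traceMap^[n] p).1| := by
    intro n
    induction n with
    | zero => exact ⟨min_le_left _ _, min_le_right _ _, hz, by simpa using hx.le⟩
    | succ n ih =>
      obtain ⟨i1, i2, i3, i4⟩ := ih
      have := traceMap_step c hc _ i1 i2 i3
      rw [Function.iterate_succ_apply']
      refine ⟨this.1, this.2.1, this.2.2.1, ?_⟩
      have := this.2.2.2
      have hcp : (0:ℝ) < c := by linarith
      calc c ^ (n+1) = c * c ^ n := by ring
        _ ≤ c * |(traceMap^[n] p).1| := by nlinarith [pow_pos hcp n]
        _ ≤ _ := this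
  intro hb
  obtain ⟨M, hM⟩ := hb.exists_norm_le
  obtain ⟨n, hn⟩ := pow_unbounded_of_one_lt M hc
  have h1 : ‖traceMap^[n] p‖ ≤ M := hM _ ⟨n, rfl⟩
  have h2 : |(traceMap^[n] p).1| ≤ ‖traceMap^[n] p‖ := by
    simpa [Real.norm_eq_abs] using norm_fst_le (traceMap^[n] p)
  have := (main n).2.2.2
  linarith

theorem sufficient_condition_for_escape :
    (∀ p : ℝ × ℝ × ℝ, 1 < |p.1| → 1 < |p.2.1| → |p.2.2| ≤ |p.1 * p.2.1| →
      ¬ Bornology.IsBounded (Set.range fun n : ℕ => traceMap^[n] p)) ∧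
    (∀ p : ℝ × ℝ × ℝ, 1 < |p.2.1| → 1 < |p.2.2| → |p.1| ≤ |p.2.1 * p.2.2| →
      ¬ Bornology.IsBounded (Set.range fun n : ℕ => traceMapInv^[n] p)) := by
  constructor
  · exact traceMap_escape
  · intro p hy hz hx hb
    set s : ℝ × ℝ × ℝ → ℝ × ℝ × ℝ := fun q => (q.2.2, q.2.1, q.1) with hs
    have hconj : ∀ q, traceMapInv q = s (traceMap (s q)) := by
      intro q; simp only [hs, traceMap, traceMapInv]; ring_nf
    have hit : ∀ n q, traceMapInv^[n] q = s (traceMap^[n] (s q)) := by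
      intro n
      induction n with
      | zero => intro q; simp [hs]
      | succ n ih =>
        intro q
        rw [Function.iterate_succ_apply, Function.iterate_succ_apply, hconj]
        rw [ih]
    have hsp1 : |(s p).1| = |p.2.2| := rfl
    refine traceMap_escape (s p) (by simpa [hs] using hz) (by simpa [hs] using hy)
      (by simpa [hs, abs_mul, mul_comm] using hx) ?_
    have hcont : LipschitzWith 1 s := by
      apply LipschitzWith.mk_one
      intro q r
      simp only [hs, Prod.dist_eq]
      try simp [dist_comm, max_comm, max_assoc, max_left_comm]
    have : Set.range (fun n : ℕ => traceMap^[n] (s p)) ⊆ s '' Set.range (fun n : ℕ => traceMapInv^[n] p) := by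
      rintro _ ⟨n, rfl⟩
      refine ⟨traceMapInv^[n] p, ⟨n, rfl⟩, ?_⟩
      rw [hit]
    exact Bornology.IsBounded.subset (hcont.isBounded_image hb) this
end

section
/- Let V₀ < 0 and let p ∈ ℝ³ satisfy I(p) = V₀ and have bounded forward orbit under the Fibonacci trace map. Then there exists an open neighborhood B_p of p in ℝ³ such that every point q ∈ B_p satisfies I(q) < 0 and also has bounded forward orbit under T. -/
/-- The Fricke–Vogt invariant. -/
noncomputable def frickeVogt : ℝ × ℝ × ℝ → ℝ :=
  fun p => p.1 ^ 2 + p.2.1 ^ 2 + p.2.2 ^ 2 - 2 * p.1 * p.2.1 * p.2.2 - 1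

private lemma fv_def (x y z : ℝ) :
    frickeVogt (x, y, z) = x^2 + y^2 + z^2 - 2*x*y*z - 1 := rfl

private lemma fv_inv (q : ℝ × ℝ × ℝ) : frickeVogt (traceMap q) = frickeVogt q := by
  obtain ⟨x, y, z⟩ := q
  simp only [traceMap, frickeVogt]
  ring

/-- Trichotomy: negative invariant forces all coordinates inside or all outside. -/
private lemma tricho (x y z : ℝ) (h : frickeVogt (x, y, z) < 0) :
    (x^2 < 1 ∧ y^2 < 1 ∧ z^2 < 1) ∨ (1 < x^2 ∧ 1 < y^2 ∧ 1 < z^2) := by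
  rw [fv_def] at h
  have hxy : (x^2-1)*(y^2-1) > 0 := by nlinarith [sq_nonneg (z - x*y)]
  have hyz : (y^2-1)*(z^2-1) > 0 := by nlinarith [sq_nonneg (x - y*z)]
  have hxz : (x^2-1)*(z^2-1) > 0 := by nlinarith [sq_nonneg (y - x*z)]
  rcases lt_trichotomy (x^2) 1 with hx | hx | hx
  · left
    refine ⟨hx, by nlinarith, by nlinarith⟩
  · exfalso; rw [hx] at hxy; simp at hxy
  · right
    refine ⟨hx, by nlinarith, by nlinarith⟩

private lemma newCoord_sq_lt (x y z : ℝ) (h : frickeVogt (x, y, z) < 0)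
    (hx : x^2 < 1) (hy : y^2 < 1) : (2*x*y - z)^2 < 1 := by
  have hz : z^2 < 1 := by
    rcases tricho x y z h with ⟨_, _, h3⟩ | ⟨h1, _, _⟩
    · exact h3
    · linarith
  rw [fv_def] at h
  have h1 : (z - x*y)^2 < (1-x^2)*(1-y^2) := by nlinarith
  have ha : (z - x*y)^2 < (1 - x*y)^2 := by nlinarith [sq_nonneg (x-y)]
  have hb : (z - x*y)^2 < (1 + x*y)^2 := by nlinarith [sq_nonneg (x+y)]
  have h1z : z < 1 := by nlinarith
  have h2z : -1 < z := by nlinarith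
  have hd1 : 2*x*y - z < 1 := by nlinarith [ha, h1z]
  have hd2 : -1 < 2*x*y - z := by nlinarith [hb, h2z]
  nlinarith [hd1, hd2]

private lemma C_invariant (q : ℝ × ℝ × ℝ) (h1 : frickeVogt q < 0)
    (h2 : q.1^2 < 1) (h3 : q.2.1^2 < 1) :
    frickeVogt (traceMap q) < 0 ∧ (traceMap q).1^2 < 1 ∧ (traceMap q).2.1^2 < 1 := by
  obtain ⟨x, y, z⟩ := q
  exact ⟨by rw [fv_inv]; exact h1, newCoord_sq_lt x y z h1 h2 h3, h2⟩

private lemma norm_le_one_of_C (r : ℝ × ℝ × ℝ) (h1 : frickeVogt r < 0)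
    (h2 : r.1^2 < 1) (h3 : r.2.1^2 < 1) : ‖r‖ ≤ 1 := by
  obtain ⟨x, y, z⟩ := r
  simp only at h2 h3
  have hz : z^2 < 1 := by
    rcases tricho x y z h1 with ⟨_, _, h⟩ | ⟨h, _, _⟩
    · exact h
    · linarith
  rw [Prod.norm_def, Prod.norm_def]
  simp only [Real.norm_eq_abs]
  refine max_le ?_ (max_le ?_ ?_) <;>
    [exact abs_le.mpr ⟨by nlinarith, by nlinarith⟩;
     exact abs_le.mpr ⟨by nlinarith, by nlinarith⟩;
     exact abs_le.mpr ⟨by nlinarith, by nlinarith⟩]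


/-- Abstract growth contradiction for the modulus sequence. -/
private lemma growth_contradiction (v : ℕ → ℝ) (M lam : ℝ)
    (hvM : ∀ n, v n ≤ M) (hv1 : ∀ n, 1 < v n)
    (hlam1 : 1 < lam) (hlamv : ∀ n, lam ≤ v n)
    (hrec : ∀ n, 2 * v (n+2) * v (n+1) - v n ≤ v (n+3)) : False := by
  have hlam0 : (0:ℝ) < lam := by linarith
  by_cases hall : ∀ n, v (n+1) * v (n+2) < v n
  · have key : ∀ n, lam * v (n+1) ≤ v n := by
      intro n
      have h1 := hall n
      have h2 := hlamv (n+2)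
      nlinarith [hv1 (n+1)]
    have claim : ∀ n, lam ^ n * v n ≤ v 0 := by
      intro n; induction n with
      | zero => simp
      | succ n ih =>
        have e : lam^(n+1) * v (n+1) = lam^n * (lam * v (n+1)) := by ring
        rw [e]
        have h2 : lam^n * (lam * v (n+1)) ≤ lam^n * v n :=
          mul_le_mul_of_nonneg_left (key n) (by positivity)
        linarith
    obtain ⟨n, hn⟩ := pow_unbounded_of_one_lt M hlam1
    have h1 := claim n
    have h2 : lam^n ≤ lam^n * v n := by nlinarith [hv1 n, pow_pos hlam0 n]
    linarith [hvM 0]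
  · push_neg at hall
    obtain ⟨n₀, hn₀⟩ := hall
    have P : ∀ k, v (n₀+k+1) * v (n₀+k+2) ≤ v (n₀+k+3) := by
      intro k; induction k with
      | zero =>
        simp only [Nat.add_zero]
        nlinarith [hn₀, hrec n₀]
      | succ k ih =>
        have h := hrec (n₀+k+1)
        have e1 : n₀ + k + 1 + 1 = n₀ + k + 2 := rfl
        have e2 : n₀ + k + 1 + 2 = n₀ + k + 3 := rfl
        have e3 : n₀ + k + 1 + 3 = n₀ + k + 4 := rfl
        have e4 : n₀ + (k+1) + 1 = n₀ + k + 2 := rfl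
        have e5 : n₀ + (k+1) + 2 = n₀ + k + 3 := rfl
        have e6 : n₀ + (k+1) + 3 = n₀ + k + 4 := rfl
        rw [e4, e5, e6]
        rw [e1, e2, e3] at h
        nlinarith [ih, hv1 (n₀+k+1), hv1 (n₀+k+2), hv1 (n₀+k+3)]
    have G : ∀ k, lam ^ k * v (n₀+3) ≤ v (n₀+3+k) := by
      intro k; induction k with
      | zero => simp
      | succ k ih =>
        have hP := P (k+1)
        have e1 : n₀ + (k+1) + 1 = n₀ + k + 2 := rfl
        have e2 : n₀ + (k+1) + 2 = n₀ + k + 3 := rfl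
        have e3 : n₀ + (k+1) + 3 = n₀ + k + 4 := rfl
        rw [e1, e2, e3] at hP
        have e4 : n₀ + 3 + (k+1) = n₀ + k + 4 := by omega
        have e5 : n₀ + 3 + k = n₀ + k + 3 := by omega
        rw [e4]
        rw [e5] at ih
        have hl := hlamv (n₀+k+2)
        have hvpos : (0:ℝ) < v (n₀+k+3) := by linarith [hv1 (n₀+k+3)]
        calc lam ^ (k+1) * v (n₀+3) = lam * (lam ^ k * v (n₀+3)) := by ring
          _ ≤ lam * v (n₀+k+3) := by
              apply mul_le_mul_of_nonneg_left ih (le_of_lt hlam0)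
          _ ≤ v (n₀+k+2) * v (n₀+k+3) := by
              apply mul_le_mul_of_nonneg_right hl (le_of_lt hvpos)
          _ ≤ v (n₀+k+4) := hP
    obtain ⟨k, hk⟩ := pow_unbounded_of_one_lt M hlam1
    have h1 := G k
    have h2 : lam^k ≤ lam^k * v (n₀+3) := by nlinarith [hv1 (n₀+3), pow_pos hlam0 k]
    linarith [hvM (n₀+3+k)]

/-- Points with all coordinates outside [-1,1] have unbounded orbit. -/
private lemma e_case (V₀ : ℝ) (hV₀ : V₀ < 0) (p : ℝ × ℝ × ℝ) (hI : frickeVogt p = V₀)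
    (hpE : 1 < p.1^2 ∧ 1 < p.2.1^2 ∧ 1 < p.2.2^2) :
    ¬ Bornology.IsBounded (Set.range fun n : ℕ => traceMap^[n] p) := by
  intro hB
  set q : ℕ → ℝ × ℝ × ℝ := fun n => traceMap^[n] p with hqdef
  have hqs : ∀ n, q (n+1) = traceMap (q n) := fun n => Function.iterate_succ_apply' traceMap n p
  have hfv : ∀ n, frickeVogt (q n) = V₀ := by
    intro n; induction n with
    | zero => exact hI
    | succ n ih => rw [hqs, fv_inv]; exact ih
  have hEn : ∀ n, 1 < (q n).1^2 ∧ 1 < (q n).2.1^2 ∧ 1 < (q n).2.2^2 := by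
    intro n; induction n with
    | zero => exact hpE
    | succ n ih =>
      have h2 : (q (n+1)).2.1 = (q n).1 := by rw [hqs]; rfl
      have hI' : frickeVogt (q (n+1)) < 0 := by rw [hfv]; exact hV₀
      rcases tricho (q (n+1)).1 (q (n+1)).2.1 (q (n+1)).2.2
          (by rw [show ((q (n+1)).1, (q (n+1)).2.1, (q (n+1)).2.2) = q (n+1) from rfl]; exact hI')
        with ⟨_, hh, _⟩ | hgt
      · rw [h2] at hh; linarith [ih.1]
      · exact hgt
  obtain ⟨M₀, hM₀⟩ := (Metric.isBounded_iff_subset_closedBall 0).mp hB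
  set M := max M₀ 2 with hMdef
  have hM2 : (2:ℝ) ≤ M := le_max_right _ _
  set v : ℕ → ℝ := fun n => |(q n).2.2| with hvdef
  have hvM : ∀ n, v n ≤ M := by
    intro n
    have h2 : ‖q n‖ ≤ M₀ := mem_closedBall_zero_iff.mp (hM₀ ⟨n, rfl⟩)
    have h3 : |(q n).2.2| ≤ ‖(q n).2‖ := by
      rw [← Real.norm_eq_abs]; exact norm_snd_le (q n).2
    calc v n ≤ ‖(q n).2‖ := h3
      _ ≤ ‖q n‖ := norm_snd_le _
      _ ≤ M₀ := h2
      _ ≤ M := le_max_left _ _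
  have hv1 : ∀ n, 1 < v n := by
    intro n
    have h := (hEn n).2.2
    have h0 := abs_nonneg (q n).2.2
    nlinarith [sq_abs (q n).2.2]
  have hv2 : ∀ n, v (n+1) = |(q n).2.1| := by
    intro n; simp only [hvdef, hqs]; rfl
  have hv3 : ∀ n, v (n+2) = |(q n).1| := by
    intro n; simp only [hvdef, hqs]; rfl
  have hrec : ∀ n, 2 * v (n+2) * v (n+1) - v n ≤ v (n+3) := by
    intro n
    have e3 : v (n+3) = |2 * (q n).1 * (q n).2.1 - (q n).2.2| := by
      simp only [hvdef, hqs]; rfl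
    rw [e3, hv3 n, hv2 n]
    calc 2 * |(q n).1| * |(q n).2.1| - |(q n).2.2|
        = |2 * (q n).1 * (q n).2.1| - |(q n).2.2| := by
          rw [abs_mul, abs_mul, abs_two]
      _ ≤ |2 * (q n).1 * (q n).2.1 - (q n).2.2| := abs_sub_abs_le_abs_sub _ _
  have hM1 : (0:ℝ) < M^2 - 1 := by nlinarith
  set K := -V₀ / (M^2 - 1) with hKdef
  have hKpos : 0 < K := div_pos (by linarith) hM1
  have hvK : ∀ n, 1 + K ≤ v n ^ 2 := by
    intro n
    have hfvn : (q n).1^2 + (q n).2.1^2 + (q n).2.2^2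
        - 2*(q n).1*(q n).2.1*(q n).2.2 - 1 = V₀ := hfv n
    have hid : ((q n).1 - (q n).2.1 * (q n).2.2)^2
        = ((q n).2.1^2 - 1) * ((q n).2.2^2 - 1) + V₀ := by linear_combination hfvn
    have h1 : -V₀ ≤ ((q n).2.1^2 - 1) * ((q n).2.2^2 - 1) := by
      nlinarith [sq_nonneg ((q n).1 - (q n).2.1 * (q n).2.2)]
    have h2 : (q n).2.1^2 ≤ M^2 := by
      have ha := hvM (n+1)
      rw [hv2 n] at ha
      nlinarith [abs_nonneg (q n).2.1, sq_abs (q n).2.1]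
    have h4 : 0 < (q n).2.2^2 - 1 := by linarith [(hEn n).2.2]
    have h5 : -V₀ ≤ ((q n).2.2^2 - 1) * (M^2 - 1) := by nlinarith [(hEn n).2.1]
    have h6 : K ≤ (q n).2.2^2 - 1 := by
      rw [hKdef]
      exact (div_le_iff₀ hM1).mpr h5
    have h7 : v n ^ 2 = (q n).2.2^2 := sq_abs _
    linarith [h7, h6]
  set lam := Real.sqrt (1 + K) with hlam
  have hlam1 : 1 < lam := by
    rw [hlam, show (1:ℝ) = Real.sqrt 1 from Real.sqrt_one.symm]
    exact Real.sqrt_lt_sqrt (by norm_num) (by rw [Real.sqrt_one]; linarith)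
  have hlamv : ∀ n, lam ≤ v n := by
    intro n
    have h1 : lam ≤ Real.sqrt (v n ^ 2) := Real.sqrt_le_sqrt (hvK n)
    rwa [Real.sqrt_sq (abs_nonneg _)] at h1
  exact growth_contradiction v M lam hvM hv1 hlam1 hlamv hrec


theorem bounded_orbit_open_for_negative_invariant
    (V₀ : ℝ) (hV₀ : V₀ < 0) (p : ℝ × ℝ × ℝ) (hI : frickeVogt p = V₀)
    (hB : Bornology.IsBounded (Set.range fun n : ℕ => traceMap^[n] p)) :
    ∃ B : Set (ℝ × ℝ × ℝ), IsOpen B ∧ p ∈ B ∧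
      ∀ q ∈ B, frickeVogt q < 0 ∧
        Bornology.IsBounded (Set.range fun n : ℕ => traceMap^[n] q) := by
  have hIp : frickeVogt p < 0 := by rw [hI]; exact hV₀
  have hIp' : frickeVogt (p.1, p.2.1, p.2.2) < 0 := hIp
  rcases tricho p.1 p.2.1 p.2.2 hIp' with hpC | hpE
  · -- p is in the compact region
    refine ⟨({q | frickeVogt q < 0} ∩ {q | q.1^2 < 1}) ∩ {q | q.2.1^2 < 1}, ?_, ?_, ?_⟩
    · have hc : Continuous frickeVogt := by
        unfold frickeVogt; fun_prop
      exact ((isOpen_lt hc continuous_const).inter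
          (isOpen_lt ((continuous_fst).pow 2) continuous_const)).inter
        (isOpen_lt ((continuous_snd.fst).pow 2) continuous_const)
    · exact ⟨⟨hIp, hpC.1⟩, hpC.2.1⟩
    · rintro r ⟨⟨hr1, hr2⟩, hr3⟩
      refine ⟨hr1, ?_⟩
      have hiter : ∀ n, frickeVogt (traceMap^[n] r) < 0 ∧
          (traceMap^[n] r).1^2 < 1 ∧ (traceMap^[n] r).2.1^2 < 1 := by
        intro n; induction n with
        | zero => exact ⟨hr1, hr2, hr3⟩
        | succ n ih =>
          rw [Function.iterate_succ_apply']
          exact C_invariant _ ih.1 ih.2.1 ih.2.2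
      apply (Metric.isBounded_closedBall (x := (0:ℝ×ℝ×ℝ)) (r := 1)).subset
      rintro s ⟨n, rfl⟩
      exact mem_closedBall_zero_iff.mpr
        (norm_le_one_of_C _ (hiter n).1 (hiter n).2.1 (hiter n).2.2)
  · -- p is in the escaping region: contradiction with hB
    exact absurd hB (e_case V₀ hV₀ p hI hpE)
end

section
/- There are no points with bounded forward orbit whose entire forward orbit stays in the region where all coordinates exceed one in modulus, on any surface of positive invariant: if p ∈ ℝ³ satisfies I(p) > 0 and for every k ∈ ℕ all three coordinates of Tᵏ(p) are greater than 1 in absolute value, then the forward orbit {Tⁿ(p) : n ≥ 0} is unbounded. -/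
lemma frickeVogt_traceMap (r : ℝ × ℝ × ℝ) : frickeVogt (traceMap r) = frickeVogt r := by
  simp only [traceMap, frickeVogt]
  ring

/-- Key gap lemma: on an invariant surface of level `J > 0`, if `|x|, |y| > 1` and the
"new" root `2xy - z` has modulus less than `|xy|`, then `|z| ≥ |xy| + √J`. -/
lemma key_gap (x y z J : ℝ) (hJ : 0 < J)
    (hinv : x ^ 2 + y ^ 2 + z ^ 2 - 2 * x * y * z - 1 = J)
    (hx : 1 < |x|) (hy : 1 < |y|)
    (hw : |2 * x * y - z| < |x * y|) :
    |x * y| + Real.sqrt J ≤ |z| := by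
  have hx2 : 1 < x ^ 2 := by nlinarith [sq_abs x, abs_nonneg x]
  have hy2 : 1 < y ^ 2 := by nlinarith [sq_abs y, abs_nonneg y]
  have hd2 : (z - x * y) ^ 2 = (x ^ 2 - 1) * (y ^ 2 - 1) + J := by linear_combination hinv
  have hJd : J ≤ (z - x * y) ^ 2 := by nlinarith
  have hsd : Real.sqrt J ≤ |z - x * y| := by
    calc Real.sqrt J ≤ Real.sqrt ((z - x * y) ^ 2) := Real.sqrt_le_sqrt hJd
    _ = |z - x * y| := Real.sqrt_sq_eq_abs _
  have hsq : (2 * x * y - z) ^ 2 < (x * y) ^ 2 := by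
    have := mul_self_lt_mul_self (abs_nonneg (2 * x * y - z)) hw
    nlinarith [sq_abs (2 * x * y - z), sq_abs (x * y)]
  have hpos : 0 ≤ x * y * (z - x * y) := by nlinarith
  have hprod : |x * y| * |z - x * y| = x * y * (z - x * y) := by
    rw [← abs_mul]; exact abs_of_nonneg hpos
  have hz2 : (|x * y| + Real.sqrt J) ^ 2 ≤ z ^ 2 := by
    nlinarith [sq_abs (x * y), sq_abs (z - x * y), Real.sq_sqrt hJ.le,
      Real.sqrt_nonneg J, abs_nonneg (x * y), hsd, hprod,
      mul_le_mul_of_nonneg_left hsd (abs_nonneg (x * y))]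
  have h := Real.sqrt_le_sqrt hz2
  rwa [Real.sqrt_sq (by positivity), Real.sqrt_sq_eq_abs] at h

/-- Abstract version: a sequence satisfying the trace-map recursion, staying outside
the unit interval in modulus, on a positive invariant level, cannot be bounded. -/
lemma seq_unbounded (A : ℕ → ℝ) (J C : ℝ) (hJ : 0 < J)
    (habs : ∀ m, 1 < |A m|)
    (hrec : ∀ m, A (m + 3) = 2 * A (m + 2) * A (m + 1) - A m)
    (hinv : ∀ m, A (m + 2) ^ 2 + A (m + 1) ^ 2 + A m ^ 2
      - 2 * A (m + 2) * A (m + 1) * A m - 1 = J)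
    (hCb : ∀ m, |A m| ≤ C) : False := by
  by_cases hcase : ∃ m, |A m| ≤ |A (m + 1)| * |A (m + 2)|
  · -- growth case
    obtain ⟨m₀, hm₀⟩ := hcase
    have hgstep : ∀ m, |A m| ≤ |A (m + 1)| * |A (m + 2)| →
        |A (m + 2)| * |A (m + 1)| ≤ |A (m + 3)| := by
      intro m hm
      have t : |2 * A (m + 2) * A (m + 1)| - |A m| ≤ |A (m + 3)| := by
        calc |2 * A (m + 2) * A (m + 1)| - |A m|
            ≤ |2 * A (m + 2) * A (m + 1) - A m| := abs_sub_abs_le_abs_sub _ _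
          _ = |A (m + 3)| := by rw [hrec m]
      have t2 : |2 * A (m + 2) * A (m + 1)| = 2 * (|A (m + 2)| * |A (m + 1)|) := by
        rw [abs_mul, abs_mul, abs_two]; ring
      nlinarith [hm, t, t2]
    have P : ∀ k, |A (m₀ + k)| ≤ |A (m₀ + k + 1)| * |A (m₀ + k + 2)| := by
      intro k
      induction k with
      | zero => exact hm₀
      | succ n ih =>
        have hg : |A (m₀ + n + 2)| * |A (m₀ + n + 1)| ≤ |A (m₀ + n + 3)| :=
          hgstep (m₀ + n) ih
        have l1 : 1 < |A (m₀ + n + 2)| := habs _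
        have l2 : 1 < |A (m₀ + n + 1)| := habs _
        show |A (m₀ + n + 1)| ≤ |A (m₀ + n + 2)| * |A (m₀ + n + 3)|
        nlinarith [abs_nonneg (A (m₀ + n + 3)), abs_nonneg (A (m₀ + n + 1)),
          mul_nonneg (abs_nonneg (A (m₀ + n + 2))) (abs_nonneg (A (m₀ + n + 1)))]
    have G : ∀ k, |A (m₀ + k + 2)| * |A (m₀ + k + 1)| ≤ |A (m₀ + k + 3)| :=
      fun k => hgstep (m₀ + k) (P k)
    have hL1 : 1 < min |A (m₀ + 1)| |A (m₀ + 2)| := lt_min (habs _) (habs _)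
    set L := min |A (m₀ + 1)| |A (m₀ + 2)| with hLdef
    have LB : ∀ k, L ≤ |A (m₀ + k + 1)| ∧ L ≤ |A (m₀ + k + 2)| := by
      intro k
      induction k with
      | zero => exact ⟨min_le_left _ _, min_le_right _ _⟩
      | succ n ih =>
        refine ⟨ih.2, ?_⟩
        have hg := G n
        have l1 : 1 < |A (m₀ + n + 1)| := habs _
        show L ≤ |A (m₀ + n + 3)|
        nlinarith [ih.1, ih.2, hL1]
    have GR : ∀ k, L ^ k ≤ |A (m₀ + k + 2)| := by
      intro k
      induction k with
      | zero => simpa using (habs (m₀ + 2)).le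
      | succ n ih =>
        have hg := G n
        have h1n := (LB n).1
        show L ^ (n + 1) ≤ |A (m₀ + n + 3)|
        calc L ^ (n + 1) = L ^ n * L := by ring
          _ ≤ |A (m₀ + n + 2)| * |A (m₀ + n + 1)| :=
            mul_le_mul ih h1n (by linarith) (abs_nonneg _)
          _ ≤ |A (m₀ + n + 3)| := hg
    obtain ⟨k, hk⟩ := pow_unbounded_of_one_lt C hL1
    have h1 := GR k
    have h2 := hCb (m₀ + k + 2)
    linarith
  · -- contradiction case: strictly decreasing by √J on even steps
    push_neg at hcase
    have hstep : ∀ m, |A (m + 2)| + Real.sqrt J ≤ |A m| := by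
      intro m
      have hx := habs (m + 2)
      have hy := habs (m + 1)
      have hw : |2 * A (m + 2) * A (m + 1) - A m| < |A (m + 2) * A (m + 1)| := by
        rw [← hrec m, abs_mul]
        have h3 : |A (m + 2)| * |A (m + 3)| < |A (m + 1)| := hcase (m + 1)
        nlinarith [habs (m + 2), habs (m + 1), abs_nonneg (A (m + 3)),
          abs_nonneg (A (m + 1))]
      have hk := key_gap (A (m + 2)) (A (m + 1)) (A m) J hJ (hinv m) hx hy hw
      have h5 : |A (m + 2)| ≤ |A (m + 2) * A (m + 1)| := by
        rw [abs_mul]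
        nlinarith [habs (m + 1), abs_nonneg (A (m + 2))]
      linarith
    have hiter : ∀ k : ℕ, |A (2 * k)| + (k : ℝ) * Real.sqrt J ≤ |A 0| := by
      intro k
      induction k with
      | zero => simp
      | succ n ih =>
        have hst : |A (2 * n + 2)| + Real.sqrt J ≤ |A (2 * n)| := hstep (2 * n)
        have e : 2 * (n + 1) = 2 * n + 2 := by ring
        rw [e]
        push_cast
        push_cast at ih
        linarith
    have hsJ : 0 < Real.sqrt J := Real.sqrt_pos.mpr hJ
    obtain ⟨k, hk⟩ := exists_nat_gt ((|A 0| - 1) / Real.sqrt J)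
    rw [div_lt_iff₀ hsJ] at hk
    have h2k := habs (2 * k)
    have h3k := hiter k
    linarith

theorem no_bounded_orbit_stays_outside_unit_cube
    (p : ℝ × ℝ × ℝ) (hI : 0 < frickeVogt p)
    (h : ∀ k : ℕ, 1 < |(traceMap^[k] p).1| ∧ 1 < |(traceMap^[k] p).2.1| ∧
      1 < |(traceMap^[k] p).2.2|) :
    ¬ Bornology.IsBounded (Set.range fun n : ℕ => traceMap^[n] p) := by
  intro hb
  obtain ⟨C, hC⟩ := isBounded_iff_forall_norm_le.mp hb
  have hco : ∀ m : ℕ, traceMap^[m + 1] p =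
      (2 * (traceMap^[m] p).1 * (traceMap^[m] p).2.1 - (traceMap^[m] p).2.2,
       (traceMap^[m] p).1, (traceMap^[m] p).2.1) := by
    intro m
    rw [Function.iterate_succ_apply']
    rfl
  have hinvq : ∀ m, frickeVogt (traceMap^[m] p) = frickeVogt p := by
    intro m
    induction m with
    | zero => rfl
    | succ n ih => rw [Function.iterate_succ_apply', frickeVogt_traceMap]; exact ih
  have habs : ∀ m, 1 < |(traceMap^[m] p).2.2| := fun m => (h m).2.2
  have g1 : ∀ m, (traceMap^[m + 1] p).2.2 = (traceMap^[m] p).2.1 := by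
    intro m; rw [hco m]
  have g2 : ∀ m, (traceMap^[m + 1] p).2.1 = (traceMap^[m] p).1 := by
    intro m; rw [hco m]
  have f1 : ∀ m, (traceMap^[m + 1] p).2.2 = (traceMap^[m] p).2.1 := g1
  have f2 : ∀ m, (traceMap^[m + 2] p).2.2 = (traceMap^[m] p).1 := by
    intro m
    have e1 : (traceMap^[m + 2] p).2.2 = (traceMap^[m + 1] p).2.1 := g1 (m + 1)
    rw [e1, g2 m]
  have hrec : ∀ m : ℕ, (traceMap^[m + 3] p).2.2 =
      2 * (traceMap^[m + 2] p).2.2 * (traceMap^[m + 1] p).2.2 - (traceMap^[m] p).2.2 := by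
    intro m
    have e1 : (traceMap^[m + 3] p).2.2 = (traceMap^[m + 1] p).1 := f2 (m + 1)
    have e2 : (traceMap^[m + 1] p).1 =
        2 * (traceMap^[m] p).1 * (traceMap^[m] p).2.1 - (traceMap^[m] p).2.2 := by
      rw [hco m]
    rw [e1, e2, f1 m, f2 m]
  have hinv : ∀ m : ℕ, (traceMap^[m + 2] p).2.2 ^ 2 + (traceMap^[m + 1] p).2.2 ^ 2
      + (traceMap^[m] p).2.2 ^ 2
      - 2 * (traceMap^[m + 2] p).2.2 * (traceMap^[m + 1] p).2.2 * (traceMap^[m] p).2.2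
      - 1 = frickeVogt p := by
    intro m
    have e := hinvq m
    simp only [frickeVogt] at e ⊢
    rw [f1 m, f2 m]
    exact e
  have hCb : ∀ m, |(traceMap^[m] p).2.2| ≤ C := by
    intro m
    have hm : traceMap^[m] p ∈ Set.range (fun n : ℕ => traceMap^[n] p) := ⟨m, rfl⟩
    have hn := hC _ hm
    calc |(traceMap^[m] p).2.2| = ‖(traceMap^[m] p).2.2‖ := (Real.norm_eq_abs _).symm
      _ ≤ ‖(traceMap^[m] p).2‖ := norm_snd_le _
      _ ≤ ‖traceMap^[m] p‖ := norm_snd_le _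
      _ ≤ C := hn
  exact seq_unbounded (fun m => (traceMap^[m] p).2.2) (frickeVogt p) C hI habs hrec hinv hCb
end

section
/- Characterization of escaping orbits: let p = (p_x, p_y, p_z) ∈ ℝ³ and let C ≥ 1 satisfy |p_z| ≤ C. Then the forward orbit {Tⁿ(p) : n ≥ 0} is unbounded if and only if there exists N ∈ ℕ such that, writing Tᴺ(p) = (x, y, z), one has |z| ≤ C, |x| > C and |y| > C. -/
/-- The Fricke invariant. -/
noncomputable def fricke (s : ℝ × ℝ × ℝ) : ℝ :=
  s.1 ^ 2 + s.2.1 ^ 2 + s.2.2 ^ 2 - 2 * s.1 * s.2.1 * s.2.2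

lemma fricke_traceMap (s : ℝ × ℝ × ℝ) : fricke (traceMap s) = fricke s := by
  simp only [fricke, traceMap]
  ring

lemma fricke_iter (p : ℝ × ℝ × ℝ) (n : ℕ) : fricke (traceMap^[n] p) = fricke p := by
  induction n with
  | zero => rfl
  | succ n ih => rw [Function.iterate_succ_apply', fricke_traceMap, ih]

lemma step_abs (x y z : ℝ) : 2 * |x| * |y| - |z| ≤ |2 * x * y - z| := by
  have h := abs_sub_abs_le_abs_sub (2 * x * y) z
  have h2 : |2 * x * y| = 2 * |x| * |y| := by
    rw [abs_mul, abs_mul, abs_two]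
  linarith

/-- Base escape step. -/
lemma escape_base (C : ℝ) (hC : 1 ≤ C) (q : ℝ × ℝ × ℝ)
    (hz : |q.2.2| ≤ C) (hx : C < |q.1|) (hy : C < |q.2.1|) :
    |q.1| ≤ |(traceMap q).1| ∧ |q.2.1| ≤ |(traceMap q).1| := by
  have hstep := step_abs q.1 q.2.1 q.2.2
  have h1 : (traceMap q).1 = 2 * q.1 * q.2.1 - q.2.2 := rfl
  rw [h1]
  constructor
  · nlinarith [abs_nonneg q.2.2]
  · nlinarith [abs_nonneg q.2.2]

/-- Inductive escape step. -/
lemma escape_step (a : ℝ) (ha1 : 1 < a) (s : ℝ × ℝ × ℝ)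
    (i1 : a ≤ |s.2.1|) (i2 : |s.2.1| ≤ |s.1|) (i3 : |s.2.2| ≤ |s.1|) :
    (a ≤ |(traceMap s).2.1| ∧ |(traceMap s).2.1| ≤ |(traceMap s).1| ∧
      |(traceMap s).2.2| ≤ |(traceMap s).1|) ∧
      |s.1| * (2 * a - 1) ≤ |(traceMap s).1| := by
  have hstep := step_abs s.1 s.2.1 s.2.2
  have h1 : (traceMap s).1 = 2 * s.1 * s.2.1 - s.2.2 := rfl
  have h2 : (traceMap s).2.1 = s.1 := rfl
  have h3 : (traceMap s).2.2 = s.2.1 := rfl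
  rw [h1, h2, h3]
  have hax : a ≤ |s.1| := le_trans i1 i2
  have hgrow : |s.1| * (2 * a - 1) ≤ |2 * s.1 * s.2.1 - s.2.2| := by
    nlinarith [abs_nonneg s.1, abs_nonneg s.2.1]
  refine ⟨⟨hax, ?_, ?_⟩, hgrow⟩
  · nlinarith [abs_nonneg s.1]
  · nlinarith [abs_nonneg s.1]

theorem escape_characterization
    (p : ℝ × ℝ × ℝ) (C : ℝ) (hC : 1 ≤ C) (hz : |p.2.2| ≤ C) :
    ¬ Bornology.IsBounded (Set.range fun n : ℕ => traceMap^[n] p) ↔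
      ∃ N : ℕ, |(traceMap^[N] p).2.2| ≤ C ∧ C < |(traceMap^[N] p).1| ∧
        C < |(traceMap^[N] p).2.1| := by
  constructor
  · -- unbounded → escape condition; by contrapositive
    intro hub
    by_contra hno
    push_neg at hno
    apply hub
    -- the z-coordinate sequence
    set u : ℕ → ℝ := fun n => (traceMap^[n] p).2.2 with hu
    have hy : ∀ n, (traceMap^[n] p).2.1 = u (n + 1) := by
      intro n
      rw [hu]
      simp only
      rw [Function.iterate_succ_apply']
      rfl
    have hx : ∀ n, (traceMap^[n] p).1 = u (n + 2) := by
      intro n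
      rw [hu]
      simp only
      rw [Function.iterate_succ_apply', Function.iterate_succ_apply']
      rfl
    have hno' : ∀ n, |u n| ≤ C → C < |u (n + 2)| → |u (n + 1)| ≤ C := by
      intro n h1 h2
      have := hno n
      rw [hx n, hy n] at this
      exact this h1 h2
    have hu0 : |u 0| ≤ C := hz
    -- pair property: one of two consecutive values is small
    have pair : ∀ n, |u n| ≤ C ∨ |u (n + 1)| ≤ C := by
      intro n
      induction n with
      | zero => exact Or.inl hu0
      | succ n ih =>
        rcases ih with h1 | h1
        · by_cases h2 : |u (n + 1)| ≤ C
          · exact Or.inl h2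
          · push_neg at h2
            by_cases h3 : |u (n + 2)| ≤ C
            · exact Or.inr h3
            · push_neg at h3
              exact absurd (hno' n h1 h3) (not_le.2 h2)
        · exact Or.inl h1
    -- global bound via the Fricke invariant
    set K : ℝ := C ^ 2 + Real.sqrt (C ^ 4 + |fricke p|) with hK
    have hKC : C ≤ K := by
      have h1 : Real.sqrt (C ^ 4) ≤ Real.sqrt (C ^ 4 + |fricke p|) :=
        Real.sqrt_le_sqrt (by nlinarith [abs_nonneg (fricke p)])
      have h2 : Real.sqrt (C ^ 4) = C ^ 2 := by
        rw [show C ^ 4 = (C ^ 2) ^ 2 by ring, Real.sqrt_sq (by positivity)]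
      nlinarith [Real.sqrt_nonneg (C ^ 4 + |fricke p|)]
    have hbound : ∀ n, |u n| ≤ K := by
      intro n
      match n with
      | 0 => exact hu0.trans hKC
      | (k + 1) =>
        by_cases hb : |u (k + 1)| ≤ C
        · exact hb.trans hKC
        · push_neg at hb
          have hk : |u k| ≤ C := by
            rcases pair k with h | h
            · exact h
            · exact absurd h (not_le.2 hb)
          have hk2 : |u (k + 2)| ≤ C := by
            rcases pair (k + 1) with h | h
            · exact absurd h (not_le.2 hb)
            · exact h
          -- Fricke invariant at time k
          have hfr : u (k + 2) ^ 2 + u (k + 1) ^ 2 + u k ^ 2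
              - 2 * u (k + 2) * u (k + 1) * u k = fricke p := by
            have := fricke_iter p k
            rw [fricke, hx k, hy k] at this
            exact this
          have hB0 : (0 : ℝ) ≤ |u (k + 1)| := abs_nonneg _
          have hB2 : |u (k + 1)| ^ 2 = u (k + 1) ^ 2 := sq_abs _
          have hprod : |u (k + 2)| * |u k| ≤ C * C :=
            mul_le_mul hk2 hk (abs_nonneg _) (by linarith)
          have habs : |2 * u (k + 2) * u (k + 1) * u k|
              = 2 * (|u (k + 2)| * |u k|) * |u (k + 1)| := by
            rw [abs_mul, abs_mul, abs_mul, abs_two]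
            ring
          have hP1 := le_abs_self (2 * u (k + 2) * u (k + 1) * u k)
          have hquad : |u (k + 1)| ^ 2 - 2 * C ^ 2 * |u (k + 1)| ≤ |fricke p| := by
            have h1 : fricke p ≤ |fricke p| := le_abs_self _
            nlinarith [sq_nonneg (u (k + 2)), sq_nonneg (u k)]
          have hsq : (|u (k + 1)| - C ^ 2) ^ 2 ≤ C ^ 4 + |fricke p| := by nlinarith
          have hS : Real.sqrt (C ^ 4 + |fricke p|) ^ 2 = C ^ 4 + |fricke p| :=
            Real.sq_sqrt (by positivity)
          have hSnn : 0 ≤ Real.sqrt (C ^ 4 + |fricke p|) := Real.sqrt_nonneg _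
          rw [hK]
          nlinarith
    rw [Metric.isBounded_iff_subset_closedBall 0]
    refine ⟨K, ?_⟩
    rintro q ⟨n, rfl⟩
    simp only [Metric.mem_closedBall, dist_zero_right]
    have h1 := hbound (n + 2)
    have h2 := hbound (n + 1)
    have h3 := hbound n
    rw [← hx n] at h1
    rw [← hy n] at h2
    have hnorm : ‖traceMap^[n] p‖
        = max ‖(traceMap^[n] p).1‖ (max ‖(traceMap^[n] p).2.1‖ ‖(traceMap^[n] p).2.2‖) := rfl
    rw [hnorm, Real.norm_eq_abs, Real.norm_eq_abs, Real.norm_eq_abs]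
    exact max_le h1 (max_le h2 h3)
  · -- escape condition → unbounded
    rintro ⟨N, hzN, hxN, hyN⟩ hb
    have ha1 : 1 < |(traceMap^[N] p).1| := lt_of_le_of_lt hC hxN
    set a : ℝ := |(traceMap^[N] p).1| with ha
    -- invariant + growth
    have main : ∀ n : ℕ, (a ≤ |(traceMap^[N + 1 + n] p).2.1| ∧
        |(traceMap^[N + 1 + n] p).2.1| ≤ |(traceMap^[N + 1 + n] p).1| ∧
        |(traceMap^[N + 1 + n] p).2.2| ≤ |(traceMap^[N + 1 + n] p).1|) ∧
        a * (2 * a - 1) ^ n ≤ |(traceMap^[N + 1 + n] p).1| := by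
      intro n
      induction n with
      | zero =>
        have he : traceMap^[N + 1 + 0] p = traceMap (traceMap^[N] p) :=
          Function.iterate_succ_apply' traceMap N p
        rw [he]
        obtain ⟨b1, b2⟩ := escape_base C hC (traceMap^[N] p) hzN hxN hyN
        have h2 : (traceMap (traceMap^[N] p)).2.1 = (traceMap^[N] p).1 := rfl
        have h3 : (traceMap (traceMap^[N] p)).2.2 = (traceMap^[N] p).2.1 := rfl
        refine ⟨⟨?_, ?_, ?_⟩, ?_⟩
        · rw [h2]
        · rw [h2]; exact b1
        · rw [h3]; exact b2
        · simpa using b1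
      | succ n ih =>
        obtain ⟨⟨i1, i2, i3⟩, ig⟩ := ih
        have he : traceMap^[N + 1 + (n + 1)] p = traceMap (traceMap^[N + 1 + n] p) :=
          Function.iterate_succ_apply' traceMap (N + 1 + n) p
        rw [he]
        obtain ⟨hinv, hgrow⟩ := escape_step a ha1 (traceMap^[N + 1 + n] p) i1 i2 i3
        refine ⟨hinv, ?_⟩
        have hp : (0:ℝ) < (2 * a - 1) ^ n := pow_pos (by linarith) n
        calc a * (2 * a - 1) ^ (n + 1) = (a * (2 * a - 1) ^ n) * (2 * a - 1) := by ring
          _ ≤ |(traceMap^[N + 1 + n] p).1| * (2 * a - 1) := by nlinarith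
          _ ≤ _ := hgrow
    -- derive contradiction with boundedness
    obtain ⟨r, hr⟩ := hb.subset_closedBall 0
    obtain ⟨n, hn⟩ := pow_unbounded_of_one_lt r (by linarith : (1:ℝ) < 2 * a - 1)
    have hmem : traceMap^[N + 1 + n] p ∈ Metric.closedBall (0 : ℝ × ℝ × ℝ) r :=
      hr ⟨N + 1 + n, rfl⟩
    rw [Metric.mem_closedBall, dist_zero_right] at hmem
    have hfst : |(traceMap^[N + 1 + n] p).1| ≤ ‖traceMap^[N + 1 + n] p‖ := by
      rw [← Real.norm_eq_abs]
      exact norm_fst_le _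
    have hmain := (main n).2
    have hp : (0:ℝ) < (2 * a - 1) ^ n := pow_pos (by linarith) n
    nlinarith
end

section
/- Sign of the invariant at w = 1: let α, β be complex numbers in the open unit disk, set ρ = √(1−|α|²), σ = √(1−|β|²), K = 2(1 − Re(ᾱβ)), and let I(1) = 1/ρ² + 1/σ² + (K² − 4K)/(4ρ²σ²) − 1 (the value of the Fricke–Vogt invariant on the curve of initial conditions at the spectral parameter w = 1). Then I(1) < 0 if and only if |Re(ᾱβ)| < |α|·|β|. -/
theorem invariant_at_one_negative_iff
    (α β : ℂ) (hα : ‖α‖ < 1) (hβ : ‖β‖ < 1)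
    (ρ σ K : ℝ)
    (hρ : ρ = Real.sqrt (1 - ‖α‖ ^ 2))
    (hσ : σ = Real.sqrt (1 - ‖β‖ ^ 2))
    (hK : K = 2 * (1 - ((starRingEnd ℂ) α * β).re)) :
    1 / ρ ^ 2 + 1 / σ ^ 2 + (K ^ 2 - 4 * K) / (4 * ρ ^ 2 * σ ^ 2) - 1 < 0 ↔
      |((starRingEnd ℂ) α * β).re| < ‖α‖ * ‖β‖ := by
  set a := ‖α‖ with ha
  set b := ‖β‖ with hb
  set r := ((starRingEnd ℂ) α * β).re with hr
  have ha0 : (0:ℝ) ≤ a := norm_nonneg α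
  have hb0 : (0:ℝ) ≤ b := norm_nonneg β
  have h1 : (0:ℝ) < 1 - a ^ 2 := by nlinarith
  have h2 : (0:ℝ) < 1 - b ^ 2 := by nlinarith
  have hρ2 : ρ ^ 2 = 1 - a ^ 2 := by rw [hρ]; exact Real.sq_sqrt h1.le
  have hσ2 : σ ^ 2 = 1 - b ^ 2 := by rw [hσ]; exact Real.sq_sqrt h2.le
  rw [hρ2, hσ2, hK]
  have key : 1 / (1 - a ^ 2) + 1 / (1 - b ^ 2) +
      ((2 * (1 - r)) ^ 2 - 4 * (2 * (1 - r))) / (4 * (1 - a ^ 2) * (1 - b ^ 2)) - 1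
      = (r ^ 2 - (a * b) ^ 2) / ((1 - a ^ 2) * (1 - b ^ 2)) := by
    field_simp
    ring
  rw [key]
  rw [div_neg_iff]
  constructor
  · rintro (⟨hn, hd⟩ | ⟨hn, hd⟩)
    · nlinarith [mul_pos h1 h2]
    · have := abs_nonneg r
      nlinarith [sq_abs r, abs_nonneg r, mul_nonneg ha0 hb0]
  · intro h
    right
    refine ⟨?_, mul_pos h1 h2⟩
    have h0 : (0:ℝ) ≤ a * b := mul_nonneg ha0 hb0
    nlinarith [sq_abs r, abs_nonneg r]
end

section
/- Trace bound forces growth of orbits of vectors: let A be a 2×2 complex matrix with |det A| = 1, let C ≥ 1 satisfy |tr A| ≤ C, and let v ∈ ℂ². Then max(‖A v‖, ‖A² v‖) ≥ ‖v‖ / (2C). -/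
theorem trace_bound_forces_growth
    (A : Matrix (Fin 2) (Fin 2) ℂ) (hdet : ‖A.det‖ = 1)
    (C : ℝ) (hC : 1 ≤ C) (htr : ‖A.trace‖ ≤ C)
    (v : EuclideanSpace ℂ (Fin 2)) :
    ‖v‖ / (2 * C) ≤
      max ‖Matrix.toEuclideanLin A v‖ ‖Matrix.toEuclideanLin (A * A) v‖ := by
  have hCH : A * A = A.trace • A - A.det • (1 : Matrix (Fin 2) (Fin 2) ℂ) := by
    ext i j
    fin_cases i <;> fin_cases j <;>
      simp [Matrix.mul_apply, Fin.sum_univ_two, Matrix.trace_fin_two,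
        Matrix.det_fin_two, Matrix.one_apply] <;> ring
  set a := Matrix.toEuclideanLin A v with ha
  set b := Matrix.toEuclideanLin (A * A) v with hb
  have hv : A.det • v = A.trace • a - b := by
    rw [hb, hCH]
    have h1 : (Matrix.toEuclideanLin (1 : Matrix (Fin 2) (Fin 2) ℂ)) v = v := by
      simp [Matrix.toEuclideanLin]
    simp only [map_sub, map_smul, LinearMap.sub_apply, LinearMap.smul_apply, h1]
    module
  have hnorm : ‖v‖ ≤ C * ‖a‖ + ‖b‖ := by
    have h1 : ‖A.det • v‖ = ‖v‖ := by
      rw [norm_smul, hdet, one_mul]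
    calc ‖v‖ = ‖A.trace • a - b‖ := by rw [← h1, hv]
      _ ≤ ‖A.trace • a‖ + ‖b‖ := norm_sub_le _ _
      _ = ‖A.trace‖ * ‖a‖ + ‖b‖ := by rw [norm_smul]
      _ ≤ C * ‖a‖ + ‖b‖ := by
          gcongr
  have hM : ‖v‖ ≤ 2 * C * max ‖a‖ ‖b‖ := by
    have h1 : ‖a‖ ≤ max ‖a‖ ‖b‖ := le_max_left _ _
    have h2 : ‖b‖ ≤ max ‖a‖ ‖b‖ := le_max_right _ _
    calc ‖v‖ ≤ C * ‖a‖ + ‖b‖ := hnorm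
      _ ≤ C * max ‖a‖ ‖b‖ + 1 * max ‖a‖ ‖b‖ := by
          gcongr <;> linarith
      _ = (C + 1) * max ‖a‖ ‖b‖ := by ring
      _ ≤ 2 * C * max ‖a‖ ‖b‖ := by
          have : (0:ℝ) ≤ max ‖a‖ ‖b‖ := le_max_of_le_left (norm_nonneg _)
          nlinarith
  have hCpos : (0:ℝ) < 2 * C := by linarith
  rw [div_le_iff₀ hCpos]
  linarith [hM]
end
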